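/- Suppose removing edges u'u'' and v'v'' from graph G = (V,E) disconnects it into graphs G' = (V',E') and G'' = (V'',E'') with u',v' ∈ V' and u'',v'' ∈ V'', such that: (1) u'v' ∈ E and u''v'' ∉ E; (2) G' has a spanning connected Eulerian sub-multigraph with at most 4|V'|/3 − 2 edges; (3) G'' with the edge u''v'' added has a spanning connected Eulerian sub-multigraph with at most 4|V''|/3 − 2 edges. Then G has a spanning connected Eulerian sub-multigraph with at most 4|V|/3 − 2 edges. -/

import Mathlib

open Classical in
/-- Degree of a vertex in a multigraph given by a multiset of edges. -/
noncomputable def mDegree {V : Type} (E : Multiset (Sym2 V)) (v : V) : ℕ :=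
  Multiset.card (E.filter fun e => v ∈ e)

/-- The simple graph underlying a multiset of edges (used for connectivity). -/
def mGraph {V : Type} (E : Multiset (Sym2 V)) : SimpleGraph V :=
  SimpleGraph.fromEdgeSet {e | e ∈ E}

/-- `H` is a spanning connected Eulerian sub-multigraph of `G`: all its edges are edges
of `G`, every vertex is covered and has even degree, and it is connected. -/
def IsSpanningEulerian {V : Type} (G : SimpleGraph V) (H : Multiset (Sym2 V)) : Prop :=
  (∀ e ∈ H, e ∈ G.edgeSet) ∧ (∀ v : V, 0 < mDegree H v) ∧
  (∀ v : V, Even (mDegree H v)) ∧ (∀ u v : V, (mGraph H).Reachable u v)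

open Classical

lemma mDegree_zero {V : Type} (v : V) : mDegree 0 v = 0 := by simp [mDegree]

lemma mDegree_add {V : Type} (A B : Multiset (Sym2 V)) (v : V) :
    mDegree (A + B) v = mDegree A v + mDegree B v := by
  simp [mDegree, Multiset.filter_add]

lemma mDegree_cons {V : Type} (e : Sym2 V) (A : Multiset (Sym2 V)) (v : V) :
    mDegree (e ::ₘ A) v = (if v ∈ e then 1 else 0) + mDegree A v := by
  simp only [mDegree, Multiset.filter_cons]
  split <;> simp [add_comm]

lemma mDegree_replicate {V : Type} (k : ℕ) (e : Sym2 V) (v : V) :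
    mDegree (Multiset.replicate k e) v = if v ∈ e then k else 0 := by
  induction k with
  | zero => simp [mDegree]
  | succ n ih =>
    rw [Multiset.replicate_succ, mDegree_cons, ih]
    split <;> omega

lemma mDegree_singleton {V : Type} (e : Sym2 V) (v : V) :
    mDegree {e} v = (if v ∈ e then 1 else 0) := by
  have : ({e} : Multiset (Sym2 V)) = e ::ₘ 0 := rfl
  rw [this, mDegree_cons, mDegree_zero, add_zero]

lemma mDegree_map {V W : Type} {f : V → W} (hf : Function.Injective f)
    (A : Multiset (Sym2 V)) (v : V) :
    mDegree (A.map (Sym2.map f)) (f v) = mDegree A v := by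
  induction A using Multiset.induction with
  | empty => simp [mDegree]
  | cons e A ih =>
    rw [Multiset.map_cons, mDegree_cons, mDegree_cons, ih]
    congr 1
    have : f v ∈ Sym2.map f e ↔ v ∈ e := by
      rw [Sym2.mem_map]
      constructor
      · rintro ⟨a, ha, hfa⟩; rwa [← hf hfa]
      · intro h; exact ⟨v, h, rfl⟩
    simp [this]

lemma mDegree_map_inl {α β : Type} (A : Multiset (Sym2 α)) (b : β) :
    mDegree (A.map (Sym2.map Sum.inl)) (Sum.inr b : α ⊕ β) = 0 := by
  induction A using Multiset.induction with
  | empty => simp [mDegree]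
  | cons e A ih =>
    rw [Multiset.map_cons, mDegree_cons, ih, if_neg, add_zero]
    intro hmem
    obtain ⟨a, _, h⟩ := Sym2.mem_map.1 hmem
    exact Sum.inl_ne_inr h

lemma mDegree_map_inr {α β : Type} (A : Multiset (Sym2 β)) (a : α) :
    mDegree (A.map (Sym2.map Sum.inr)) (Sum.inl a : α ⊕ β) = 0 := by
  induction A using Multiset.induction with
  | empty => simp [mDegree]
  | cons e A ih =>
    rw [Multiset.map_cons, mDegree_cons, ih, if_neg, add_zero]
    intro hmem
    obtain ⟨x, _, h⟩ := Sym2.mem_map.1 hmem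
    exact Sum.inr_ne_inl h

lemma mDegree_pos_of_mem {V : Type} {A : Multiset (Sym2 V)} {e : Sym2 V} {v : V}
    (he : e ∈ A) (hv : v ∈ e) : 0 < mDegree A v := by
  rw [mDegree, Multiset.card_pos_iff_exists_mem]
  exact ⟨e, Multiset.mem_filter.2 ⟨he, hv⟩⟩

lemma mGraph_adj {V : Type} (A : Multiset (Sym2 V)) (a b : V) :
    (mGraph A).Adj a b ↔ s(a, b) ∈ A ∧ a ≠ b := by
  simp [mGraph, SimpleGraph.fromEdgeSet_adj]

lemma reach_mono {V : Type} {A B : Multiset (Sym2 V)} (h : ∀ e ∈ A, e ∈ B) {a b : V}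
    (hr : (mGraph A).Reachable a b) : (mGraph B).Reachable a b := by
  apply hr.mono
  intro x y hxy
  rw [mGraph_adj] at hxy ⊢
  exact ⟨h _ hxy.1, hxy.2⟩

lemma reach_map {V W : Type} {f : V → W} (hf : Function.Injective f)
    (A : Multiset (Sym2 V)) {a b : V} (h : (mGraph A).Reachable a b) :
    (mGraph (A.map (Sym2.map f))).Reachable (f a) (f b) := by
  obtain ⟨w⟩ := h
  induction w with
  | nil => exact SimpleGraph.Reachable.refl _
  | @cons c d e hadj p ih =>
    refine SimpleGraph.Reachable.trans ?_ ih
    rw [mGraph_adj] at hadj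
    refine SimpleGraph.Adj.reachable ?_
    rw [mGraph_adj]
    constructor
    · have := Multiset.mem_map_of_mem (Sym2.map f) hadj.1
      rwa [Sym2.map_pair_eq] at this
    · exact fun hh => hadj.2 (hf hh)

lemma reach_transfer {V : Type} {G M : SimpleGraph V} {x y : V}
    (hadj : ∀ a b, G.Adj a b → s(a, b) ≠ s(x, y) → M.Adj a b)
    (hxy : G.Adj x y → M.Reachable x y) :
    ∀ a b : V, G.Reachable a b → M.Reachable a b := by
  intro a b h
  obtain ⟨w⟩ := h
  induction w with
  | nil => exact SimpleGraph.Reachable.refl _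
  | @cons c d e h p ih =>
    refine SimpleGraph.Reachable.trans ?_ ih
    by_cases hs : s(c, d) = s(x, y)
    · rw [Sym2.eq_iff] at hs
      rcases hs with ⟨rfl, rfl⟩ | ⟨rfl, rfl⟩
      · exact hxy h
      · exact (hxy h.symm).symm
    · exact (hadj c d h hs).reachable

lemma aux_construct {α β : Type} [Fintype α] [Fintype β]
    (G : SimpleGraph (α ⊕ β)) (u' v' : α) (u'' v'' : β)
    (G' : SimpleGraph α) (hG' : ∀ a b, G'.Adj a b ↔ G.Adj (.inl a) (.inl b))
    (G'' : SimpleGraph β) (hG'' : ∀ a b, G''.Adj a b ↔ G.Adj (.inr a) (.inr b))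
    (H' : Multiset (Sym2 α)) (hH' : IsSpanningEulerian G' H')
    (hc' : 3 * Multiset.card H' + 6 ≤ 4 * Fintype.card α)
    (H'' : Multiset (Sym2 β))
    (hH'' : IsSpanningEulerian (G'' ⊔ SimpleGraph.fromEdgeSet {s(u'', v'')}) H'')
    (hc'' : 3 * Multiset.card H'' + 6 ≤ 4 * Fintype.card β)
    (C : Multiset (Sym2 (α ⊕ β)))
    (hCE : ∀ e ∈ C, e ∈ G.edgeSet)
    (hCcard : Multiset.card C ≤ Multiset.count s(u'', v'') H'' + 2)
    (hCuu : s(Sum.inl u', Sum.inr u'') ∈ C)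
    (hCvv : s(u'', v'') ∈ H'' → s(Sum.inl v', Sum.inr v'') ∈ C)
    (hEu' : Even (mDegree C (Sum.inl u')))
    (hEv' : Even (mDegree C (Sum.inl v')))
    (hEu'' : Even (mDegree C (Sum.inr u'') + Multiset.count s(u'', v'') H''))
    (hEv'' : Even (mDegree C (Sum.inr v'') + Multiset.count s(u'', v'') H''))
    (hOl : ∀ a : α, a ≠ u' → a ≠ v' → mDegree C (Sum.inl a) = 0)
    (hOr : ∀ b : β, b ≠ u'' → b ≠ v'' → mDegree C (Sum.inr b) = 0) :
    ∃ H : Multiset (Sym2 (α ⊕ β)), IsSpanningEulerian G H ∧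
      3 * Multiset.card H + 6 ≤ 4 * Fintype.card (α ⊕ β) := by
  classical
  obtain ⟨hE', hP', hD', hR'⟩ := hH'
  obtain ⟨hE'', hP'', hD'', hR''⟩ := hH''
  set k : ℕ := Multiset.count s(u'', v'') H'' with hk
  set F : Multiset (Sym2 β) := H''.filter (fun e => ¬ e = s(u'', v'')) with hFdef
  have hdecomp : Multiset.replicate k s(u'', v'') + F = H'' := by
    rw [hFdef, hk, ← Multiset.filter_eq']
    exact Multiset.filter_add_not _ _
  have hFmem : ∀ e ∈ F, e ∈ H'' ∧ e ≠ s(u'', v'') := by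
    intro e he
    exact Multiset.mem_filter.1 he
  have hFdeg : ∀ b : β, mDegree H'' b = (if b ∈ s(u'', v'') then k else 0) + mDegree F b := by
    intro b
    rw [← hdecomp, mDegree_add, mDegree_replicate]
  have hFcard : Multiset.card H'' = k + Multiset.card F := by
    rw [← hdecomp, Multiset.card_add, Multiset.card_replicate]
  set H : Multiset (Sym2 (α ⊕ β)) :=
    H'.map (Sym2.map Sum.inl) + F.map (Sym2.map Sum.inr) + C with hHdef
  have hmemH : ∀ e, e ∈ H ↔
      (e ∈ H'.map (Sym2.map Sum.inl) ∨ e ∈ F.map (Sym2.map Sum.inr) ∨ e ∈ C) := by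
    intro e
    simp [hHdef, Multiset.mem_add, or_assoc]
  -- degree computations
  have hdegl : ∀ a : α, mDegree H (Sum.inl a) = mDegree H' a + mDegree C (Sum.inl a) := by
    intro a
    rw [hHdef, mDegree_add, mDegree_add, mDegree_map Sum.inl_injective, mDegree_map_inr,
      add_zero]
  have hdegr : ∀ b : β, mDegree H (Sum.inr b) = mDegree F b + mDegree C (Sum.inr b) := by
    intro b
    rw [hHdef, mDegree_add, mDegree_add, mDegree_map Sum.inr_injective, mDegree_map_inl,
      zero_add]
  refine ⟨H, ⟨?_, ?_, ?_, ?_⟩, ?_⟩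
  · -- edges of G
    intro e he
    rcases (hmemH e).1 he with h | h | h
    · obtain ⟨e', he', rfl⟩ := Multiset.mem_map.1 h
      have hge : e' ∈ G'.edgeSet := hE' e' he'
      revert hge
      induction e' using Sym2.ind with
      | _ a b =>
        intro hge
        rw [SimpleGraph.mem_edgeSet] at hge
        rw [Sym2.map_pair_eq, SimpleGraph.mem_edgeSet]
        exact (hG' a b).1 hge
    · obtain ⟨e', he', rfl⟩ := Multiset.mem_map.1 h
      obtain ⟨heH, hens⟩ := hFmem e' he'
      have hge : e' ∈ G''.edgeSet := by
        have := hE'' e' heH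
        rw [SimpleGraph.edgeSet_sup] at this
        rcases this with h | h
        · exact h
        · rw [SimpleGraph.edgeSet_fromEdgeSet] at h
          exact absurd h.1 (by simpa using hens)
      revert hge
      induction e' using Sym2.ind with
      | _ a b =>
        intro hge
        rw [SimpleGraph.mem_edgeSet] at hge
        rw [Sym2.map_pair_eq, SimpleGraph.mem_edgeSet]
        exact (hG'' a b).1 hge
    · exact hCE e h
  · -- positivity
    intro v
    rcases v with a | b
    · rw [hdegl]
      exact Nat.lt_of_lt_of_le (hP' a) (Nat.le_add_right _ _)
    · rw [hdegr]
      by_cases hb : b = u''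
      · have : 0 < mDegree C (Sum.inr b) :=
          mDegree_pos_of_mem hCuu (by simp [hb])
        omega
      · by_cases hb' : b = v''
        · by_cases hk0 : s(u'', v'') ∈ H''
          · have : 0 < mDegree C (Sum.inr b) :=
              mDegree_pos_of_mem (hCvv hk0) (by simp [hb'])
            omega
          · have hk0' : k = 0 := by
              rw [hk, Multiset.count_eq_zero]
              exact hk0
            have h3 := hFdeg b
            rw [hk0'] at h3
            rw [ite_self, zero_add] at h3
            have hpos := hP'' b
            omega
        · have h3 := hFdeg b
          rw [if_neg (by simp [hb, hb'])] at h3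
          have hpos := hP'' b
          omega
  · -- even degrees
    intro v
    rcases v with a | b
    · rw [hdegl]
      have hC : Even (mDegree C (Sum.inl a)) := by
        by_cases ha : a = u'
        · subst ha; exact hEu'
        · by_cases ha' : a = v'
          · subst ha'; exact hEv'
          · rw [hOl a ha ha']; exact Even.zero
      exact (hD' a).add hC
    · rw [hdegr]
      by_cases hb : b = u''
      · rw [hb]
        have h1 := hFdeg u''
        rw [if_pos (by simp : u'' ∈ s(u'', v''))] at h1
        have h2 := hD'' u''
        rw [Nat.even_iff] at h2 hEu'' ⊢
        omega
      · by_cases hb' : b = v''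
        · rw [hb']
          have h1 := hFdeg v''
          rw [if_pos (by simp : v'' ∈ s(u'', v''))] at h1
          have h2 := hD'' v''
          rw [Nat.even_iff] at h2 hEv'' ⊢
          omega
        · have h1 := hFdeg b
          rw [if_neg (by simp [hb, hb'])] at h1
          rw [zero_add] at h1
          rw [hOr b hb hb', add_zero, ← h1]
          exact hD'' b
  · -- connectivity
    have hsubl : ∀ e ∈ H'.map (Sym2.map Sum.inl), e ∈ H := fun e he => (hmemH e).2 (Or.inl he)
    have hsubr : ∀ e ∈ F.map (Sym2.map Sum.inr), e ∈ H :=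
      fun e he => (hmemH e).2 (Or.inr (Or.inl he))
    have hsubC : ∀ e ∈ C, e ∈ H := fun e he => (hmemH e).2 (Or.inr (Or.inr he))
    have hreachL : ∀ a a' : α, (mGraph H).Reachable (Sum.inl a) (Sum.inl a') := by
      intro a a'
      exact reach_mono hsubl (reach_map Sum.inl_injective _ (hR' a a'))
    have hadjuu : (mGraph H).Adj (Sum.inl u') (Sum.inr u'') := by
      rw [mGraph_adj]
      exact ⟨hsubC _ hCuu, by simp⟩
    have hreachR : ∀ b b' : β, (mGraph H).Reachable (Sum.inr b) (Sum.inr b') := by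
      intro b b'
      have hbase : (mGraph (H''.map (Sym2.map Sum.inr))).Reachable
          (Sum.inr b : α ⊕ β) (Sum.inr b') := reach_map Sum.inr_injective _ (hR'' b b')
      refine reach_transfer (x := (Sum.inr u'' : α ⊕ β)) (y := Sum.inr v'') ?_ ?_ _ _ hbase
      · intro x y hxy hne
        rw [mGraph_adj] at hxy ⊢
        obtain ⟨hmem, hxyne⟩ := hxy
        obtain ⟨e', he', heq⟩ := Multiset.mem_map.1 hmem
        have he'ne : e' ≠ s(u'', v'') := by
          intro hcon
          apply hne
          rw [← heq, hcon, Sym2.map_pair_eq]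
        have : e' ∈ F := Multiset.mem_filter.2 ⟨he', he'ne⟩
        refine ⟨hsubr _ ?_, hxyne⟩
        rw [← heq]
        exact Multiset.mem_map_of_mem _ this
      · intro hadj
        rw [mGraph_adj] at hadj
        obtain ⟨e', he', heq⟩ := Multiset.mem_map.1 hadj.1
        have : e' = s(u'', v'') := by
          apply Sym2.map.injective Sum.inr_injective
          rw [heq, Sym2.map_pair_eq]
        rw [this] at he'
        have hadjvv : (mGraph H).Adj (Sum.inl v') (Sum.inr v'') := by
          rw [mGraph_adj]
          exact ⟨hsubC _ (hCvv he'), by simp⟩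
        exact hadjuu.symm.reachable.trans ((hreachL u' v').trans hadjvv.reachable)
    intro x y
    have key : ∀ z : α ⊕ β, (mGraph H).Reachable z (Sum.inl u') := by
      intro z
      rcases z with a | b
      · exact hreachL a u'
      · exact (hreachR b u'').trans hadjuu.symm.reachable
    exact (key x).trans (key y).symm
  · -- cardinality
    have hcard : Multiset.card H = Multiset.card H' + Multiset.card F + Multiset.card C := by
      rw [hHdef]
      simp [Multiset.card_add]
    rw [Fintype.card_sum, hcard]
    omega

/-- If removing the two edges `u'u''`, `v'v''` disconnects `G` into `G'`
(on vertex set `α`, containing `u', v'`) and `G''` (on `β`, containing `u'', v''`),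
with `u'v' ∈ E`, `u''v'' ∉ E`, `G'` has a spanning connected Eulerian sub-multigraph
with at most `4|V'|/3 - 2` edges and `G'' + u''v''` has one with at most `4|V''|/3 - 2`
edges, then `G` has one with at most `4|V|/3 - 2` edges. -/
theorem stmt6 {α β : Type} [Fintype α] [Fintype β]
    (G : SimpleGraph (α ⊕ β)) (u' v' : α) (u'' v'' : β)
    (hne' : u' ≠ v') (hne'' : u'' ≠ v'')
    (hcross : ∀ a b, G.Adj (.inl a) (.inr b) → (a = u' ∧ b = u'') ∨ (a = v' ∧ b = v''))
    (huu : G.Adj (.inl u') (.inr u'')) (hvv : G.Adj (.inl v') (.inr v''))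
    (h1 : G.Adj (.inl u') (.inl v')) (h2 : ¬ G.Adj (.inr u'') (.inr v''))
    (G' : SimpleGraph α) (hG' : ∀ a b, G'.Adj a b ↔ G.Adj (.inl a) (.inl b))
    (G'' : SimpleGraph β) (hG'' : ∀ a b, G''.Adj a b ↔ G.Adj (.inr a) (.inr b))
    (H' : Multiset (Sym2 α)) (hH' : IsSpanningEulerian G' H')
    (hc' : 3 * Multiset.card H' + 6 ≤ 4 * Fintype.card α)
    (H'' : Multiset (Sym2 β))
    (hH'' : IsSpanningEulerian (G'' ⊔ SimpleGraph.fromEdgeSet {s(u'', v'')}) H'')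
    (hc'' : 3 * Multiset.card H'' + 6 ≤ 4 * Fintype.card β) :
    ∃ H : Multiset (Sym2 (α ⊕ β)), IsSpanningEulerian G H ∧
      3 * Multiset.card H + 6 ≤ 4 * Fintype.card (α ⊕ β) := by
  classical
  set eUU : Sym2 (α ⊕ β) := s(Sum.inl u', Sum.inr u'') with heUU
  set eVV : Sym2 (α ⊕ β) := s(Sum.inl v', Sum.inr v'') with heVV
  set eUV : Sym2 (α ⊕ β) := s(Sum.inl u', Sum.inl v') with heUV
  have hUUmem : eUU ∈ G.edgeSet := huu
  have hVVmem : eVV ∈ G.edgeSet := hvv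
  have hUVmem : eUV ∈ G.edgeSet := h1
  set k : ℕ := Multiset.count s(u'', v'') H'' with hk
  rcases Nat.eq_zero_or_pos k with hk0 | hkpos
  · -- k = 0 : C = {eUU, eUU}
    refine aux_construct G u' v' u'' v'' G' hG' G'' hG'' H' hH' hc' H'' hH'' hc''
      {eUU, eUU} ?_ ?_ ?_ ?_ ?_ ?_ ?_ ?_ ?_ ?_
    · intro e he
      rcases (by simpa using he : e = eUU ∨ e = eUU) with rfl | rfl <;> exact hUUmem
    · simp
    · simp [heUU]
    · intro hmem
      exact absurd (Multiset.count_eq_zero.1 hk0) (by simp [hmem])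
    · simp [Nat.even_iff, mDegree_cons, mDegree_singleton, mDegree_zero, heUU, Sym2.mem_iff]
    · simp [Nat.even_iff, mDegree_cons, mDegree_singleton, mDegree_zero, heUU, Sym2.mem_iff, Ne.symm hne' ]
    · rw [← hk, hk0]
      simp [Nat.even_iff, mDegree_cons, mDegree_singleton, mDegree_zero, heUU, Sym2.mem_iff]
    · rw [← hk, hk0]
      simp [Nat.even_iff, mDegree_cons, mDegree_singleton, mDegree_zero, heUU, Sym2.mem_iff, Ne.symm hne'']
    · intro a ha ha'
      simp [Nat.even_iff, mDegree_cons, mDegree_singleton, mDegree_zero, heUU, Sym2.mem_iff, ha]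
    · intro b hb hb'
      simp [Nat.even_iff, mDegree_cons, mDegree_singleton, mDegree_zero, heUU, Sym2.mem_iff, hb]
  · rcases Nat.even_or_odd k with hke | hko
    · -- k even, k > 0 : C = {eUU, eUU, eVV, eVV}
      refine aux_construct G u' v' u'' v'' G' hG' G'' hG'' H' hH' hc' H'' hH'' hc''
        {eUU, eUU, eVV, eVV} ?_ ?_ ?_ ?_ ?_ ?_ ?_ ?_ ?_ ?_
      · intro e he
        rcases (by simpa using he : e = eUU ∨ e = eUU ∨ e = eVV ∨ e = eVV) with
          rfl | rfl | rfl | rfl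
        · exact hUUmem
        · exact hUUmem
        · exact hVVmem
        · exact hVVmem
      · rw [← hk]
        rw [Nat.even_iff] at hke
        simp only [Multiset.insert_eq_cons, Multiset.card_cons, Multiset.card_singleton]
        omega
      · simp [heUU]
      · intro _; simp [heVV]
      · simp [Nat.even_iff, mDegree_cons, mDegree_singleton, mDegree_zero, heUU, heVV, Sym2.mem_iff, hne']
      · simp [Nat.even_iff, mDegree_cons, mDegree_singleton, mDegree_zero, heUU, heVV, Sym2.mem_iff, Ne.symm hne']
      · rw [← hk]
        have : mDegree ({eUU, eUU, eVV, eVV} : Multiset (Sym2 (α ⊕ β))) (Sum.inr u'') = 2 := by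
          simp [Nat.even_iff, mDegree_cons, mDegree_singleton, mDegree_zero, heUU, heVV, Sym2.mem_iff, hne'']
        rw [this]
        rw [Nat.even_iff] at hke ⊢
        omega
      · rw [← hk]
        have : mDegree ({eUU, eUU, eVV, eVV} : Multiset (Sym2 (α ⊕ β))) (Sum.inr v'') = 2 := by
          simp [Nat.even_iff, mDegree_cons, mDegree_singleton, mDegree_zero, heUU, heVV, Sym2.mem_iff, Ne.symm hne'']
        rw [this]
        rw [Nat.even_iff] at hke ⊢
        omega
      · intro a ha ha'
        simp [Nat.even_iff, mDegree_cons, mDegree_singleton, mDegree_zero, heUU, heVV, Sym2.mem_iff, ha, ha']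
      · intro b hb hb'
        simp [Nat.even_iff, mDegree_cons, mDegree_singleton, mDegree_zero, heUU, heVV, Sym2.mem_iff, hb, hb']
    · -- k odd : C = {eUU, eVV, eUV}
      refine aux_construct G u' v' u'' v'' G' hG' G'' hG'' H' hH' hc' H'' hH'' hc''
        {eUU, eVV, eUV} ?_ ?_ ?_ ?_ ?_ ?_ ?_ ?_ ?_ ?_
      · intro e he
        rcases (by simpa using he : e = eUU ∨ e = eVV ∨ e = eUV) with rfl | rfl | rfl
        · exact hUUmem
        · exact hVVmem
        · exact hUVmem
      · rw [← hk]
        simp only [Multiset.insert_eq_cons, Multiset.card_cons, Multiset.card_singleton]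
        omega
      · simp [heUU]
      · intro _; simp [heVV]
      · simp [Nat.even_iff, mDegree_cons, mDegree_singleton, mDegree_zero, heUU, heVV, heUV, Sym2.mem_iff, hne']
      · simp [Nat.even_iff, mDegree_cons, mDegree_singleton, mDegree_zero, heUU, heVV, heUV, Sym2.mem_iff, Ne.symm hne']
      · rw [← hk]
        have : mDegree ({eUU, eVV, eUV} : Multiset (Sym2 (α ⊕ β))) (Sum.inr u'') = 1 := by
          simp [Nat.even_iff, mDegree_cons, mDegree_singleton, mDegree_zero, heUU, heVV, heUV, Sym2.mem_iff, hne'']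
        rw [this]
        rw [Nat.odd_iff] at hko
        rw [Nat.even_iff]
        omega
      · rw [← hk]
        have : mDegree ({eUU, eVV, eUV} : Multiset (Sym2 (α ⊕ β))) (Sum.inr v'') = 1 := by
          simp [Nat.even_iff, mDegree_cons, mDegree_singleton, mDegree_zero, heUU, heVV, heUV, Sym2.mem_iff, Ne.symm hne'']
        rw [this]
        rw [Nat.odd_iff] at hko
        rw [Nat.even_iff]
        omega
      · intro a ha ha'
        simp [Nat.even_iff, mDegree_cons, mDegree_singleton, mDegree_zero, heUU, heVV, heUV, Sym2.mem_iff, ha, ha']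
      · intro b hb hb'
        simp [Nat.even_iff, mDegree_cons, mDegree_singleton, mDegree_zero, heUU, heVV, heUV, Sym2.mem_iff, hb, hb']
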